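/- Let G be a topological group that is locally compact, totally disconnected (Hausdorff) and residually discrete, meaning that the intersection of all open normal subgroups of G is trivial. Let K ≤ G be a subgroup that is compact (as a subset of G). Then the commensurator of K in G equals the union, over all subgroups L ≤ K that are open in K, of the normalizers N_G(L); that is, g ∈ G satisfies [K : K ∩ gKg⁻¹] < ∞ and [gKg⁻¹ : gKg⁻¹ ∩ K] < ∞ if and only if g normalizes some open subgroup of K. -/

import Mathlib

open Subgroup

/-- Compactness lemma: if the open normal subgroups of `G` intersect trivially and `K` is a
compact subgroup, then any relatively-open neighbourhood of `1` in `K` contains `K ∩ N` for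
some open normal subgroup `N` of `G`. -/
private lemma exists_openNormal_inter_subset {G : Type*} [Group G] [TopologicalSpace G]
    [IsTopologicalGroup G]
    (hRD : (⨅ (N : Subgroup G) (_ : N.Normal ∧ IsOpen (N : Set G)), N) = ⊥)
    (K : Subgroup G) (hK : IsCompact (K : Set G)) (V : Set G)
    (hV : IsOpen ((↑) ⁻¹' V : Set K)) (h1 : (1 : G) ∈ V) :
    ∃ N : Subgroup G, N.Normal ∧ IsOpen (N : Set G) ∧ (K : Set G) ∩ N ⊆ V := by
  classical
  have : CompactSpace K := isCompact_iff_compactSpace.mp hK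
  set C : Set G := Subtype.val '' (((↑) ⁻¹' V : Set K)ᶜ) with hC_def
  have hCcomp : IsCompact C := (hV.isClosed_compl.isCompact).image continuous_subtype_val
  have hempty : C ∩ ⋂ i : {N : Subgroup G // N.Normal ∧ IsOpen (N : Set G)},
      ((i.1 : Subgroup G) : Set G) = ∅ := by
    have hinf : (⨅ i : {N : Subgroup G // N.Normal ∧ IsOpen (N : Set G)}, i.1) = ⊥ := by
      rw [iInf_subtype]; exact hRD
    have : (⋂ i : {N : Subgroup G // N.Normal ∧ IsOpen (N : Set G)},
        ((i.1 : Subgroup G) : Set G)) = ({1} : Set G) := by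
      rw [← Subgroup.coe_iInf, hinf]; rfl
    rw [this]
    ext x
    simp only [Set.mem_inter_iff, Set.mem_singleton_iff, Set.mem_empty_iff_false, iff_false,
      not_and]
    rintro ⟨k, hk, hk1⟩ rfl
    exact hk (show (k : G) ∈ V by rw [hk1]; exact h1)
  obtain ⟨t, ht⟩ := hCcomp.elim_finite_subfamily_closed _
    (fun i => (i.1.isClosed_of_isOpen i.2.2)) hempty
  refine ⟨⨅ i ∈ t, (i.1 : Subgroup G), ?_, ?_, ?_⟩
  · constructor
    intro n hn x
    simp only [Subgroup.mem_iInf] at hn ⊢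
    exact fun i hi => (i.2.1).conj_mem n (hn i hi) x
  · have hcoe : (((⨅ i ∈ t, (i.1 : Subgroup G)) : Subgroup G) : Set G) = ⋂ i ∈ t, ((i.1 : Subgroup G) : Set G) := by
      ext x
      simp [Subgroup.mem_iInf]
    rw [hcoe]
    exact isOpen_biInter_finset fun i _ => i.2.2
  · rintro x ⟨hxK, hxN⟩
    by_contra hxV
    have hxC : x ∈ C := ⟨⟨x, hxK⟩, hxV, rfl⟩
    have hxI : x ∈ ⋂ i ∈ t, ((i.1 : Subgroup G) : Set G) := by
      simp only [Subgroup.mem_iInf, SetLike.mem_coe] at hxN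
      exact Set.mem_iInter₂.mpr fun i hi => hxN i hi
    exact absurd (ht.subset ⟨hxC, hxI⟩) (Set.notMem_empty x)

/-- **Caprace–Monod / Caprace–Reid–Willis.** Let `G` be a residually discrete, locally
compact, totally disconnected topological group and `K ≤ G` a compact subgroup. Then an
element `g ∈ G` commensurates `K` (i.e. `[K : K ∩ gKg⁻¹] < ∞` and
`[gKg⁻¹ : gKg⁻¹ ∩ K] < ∞`) if and only if `g` normalizes some subgroup of `K` that is
open in `K`; that is, `Comm_G(K) = ⋃_{L ≤ₒ K} N_G(L)`. -/
theorem stmt9 {G : Type*} [Group G] [TopologicalSpace G] [IsTopologicalGroup G]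
    [LocallyCompactSpace G] [TotallyDisconnectedSpace G] [T2Space G]
    (hRD : (⨅ (N : Subgroup G) (_ : N.Normal ∧ IsOpen (N : Set G)), N) = ⊥)
    (K : Subgroup G) (hK : IsCompact (K : Set G)) :
    ∀ g : G,
      ((K.map (MulAut.conj g).toMonoidHom).relIndex K ≠ 0 ∧
          K.relIndex (K.map (MulAut.conj g).toMonoidHom) ≠ 0) ↔
        ∃ L : Subgroup G, L ≤ K ∧ IsOpen ((↑) ⁻¹' (L : Set G) : Set K) ∧
          g ∈ Subgroup.normalizer (L : Set G) := by
  intro g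
  set f := (MulAut.conj g).toMonoidHom with hf
  have hfx : ∀ x : G, f x = g * x * g⁻¹ := fun x => rfl
  have hcomap : K.relIndex (K.map f) = (K.comap f).relIndex K :=
    (Subgroup.relIndex_comap K f K).symm
  have : CompactSpace K := isCompact_iff_compactSpace.mp hK
  constructor
  · rintro ⟨h1, h2⟩
    rw [hcomap] at h2
    set A := K.map f with hA
    set B := K.comap f with hB
    have hABrel : (A ⊓ B).relIndex K ≠ 0 := Subgroup.relIndex_inf_ne_zero h1 h2
    -- A and B are closed
    have hKclosed : IsClosed (K : Set G) := hK.isClosed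
    have hconj : Continuous fun x : G => g * x * g⁻¹ := by continuity
    have hAclosed : IsClosed (A : Set G) := by
      have : (A : Set G) = (fun x : G => g * x * g⁻¹) '' K := by
        rw [hA, Subgroup.coe_map]; rfl
      rw [this]
      exact (hK.image hconj).isClosed
    have hBclosed : IsClosed (B : Set G) := by
      have : (B : Set G) = (fun x : G => g * x * g⁻¹) ⁻¹' K := by
        rw [hB, Subgroup.coe_comap]; rfl
      rw [this]
      exact hKclosed.preimage hconj
    -- (A ⊓ B) is open in K
    have hopen : IsOpen ((↑) ⁻¹' ((A ⊓ B : Subgroup G) : Set G) : Set K) := by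
      have hfi : ((A ⊓ B).subgroupOf K).FiniteIndex := ⟨hABrel⟩
      have hcl : IsClosed (((A ⊓ B).subgroupOf K : Subgroup K) : Set K) := by
        have : (((A ⊓ B).subgroupOf K : Subgroup K) : Set K)
            = ((↑) ⁻¹' ((A ⊓ B : Subgroup G) : Set G) : Set K) := by
          rw [Subgroup.subgroupOf, Subgroup.coe_comap, Subgroup.coe_subtype]
        rw [this]
        exact ((hAclosed.inter hBclosed)).preimage continuous_subtype_val
      have := Subgroup.isOpen_of_isClosed_of_finiteIndex _ hcl
      rwa [Subgroup.subgroupOf, Subgroup.coe_comap, Subgroup.coe_subtype] at this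
    obtain ⟨N, hNnorm, hNopen, hNsub⟩ := exists_openNormal_inter_subset hRD K hK
      ((A ⊓ B : Subgroup G) : Set G) hopen (one_mem _)
    refine ⟨K ⊓ N, inf_le_left, ?_, ?_⟩
    · have : ((↑) ⁻¹' ((K ⊓ N : Subgroup G) : Set G) : Set K)
          = ((↑) ⁻¹' (N : Set G) : Set K) := by
        ext k
        simp [k.2]
      rw [this]
      exact hNopen.preimage continuous_subtype_val
    · -- g normalizes K ⊓ N
      have key : ∀ x ∈ K ⊓ N, g * x * g⁻¹ ∈ K ⊓ N ∧ g⁻¹ * x * g ∈ K ⊓ N := by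
        rintro x ⟨hxK, hxN⟩
        have hxAB : x ∈ A ⊓ B := hNsub ⟨hxK, hxN⟩
        obtain ⟨hxA, hxB⟩ := hxAB
        constructor
        · exact ⟨hxB, hNnorm.conj_mem x hxN g⟩
        · obtain ⟨k, hk, hkx⟩ := hxA
          have : g⁻¹ * x * g = k := by
            rw [← hkx, hfx]; group
          exact ⟨this ▸ hk, by simpa using hNnorm.conj_mem x hxN g⁻¹⟩
      rw [Subgroup.mem_normalizer_iff]
      intro h
      constructor
      · exact fun hh => (key h hh).1
      · intro hh
        have := (key _ hh).2
        simpa [mul_assoc] using this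
  · rintro ⟨L, hLK, hLopen, hgN⟩
    have hg := Subgroup.mem_normalizer_iff.mp hgN
    have hLrel : L.relIndex K ≠ 0 := by
      have hopen' : IsOpen ((L.subgroupOf K : Subgroup K) : Set K) := by
        rwa [Subgroup.subgroupOf, Subgroup.coe_comap, Subgroup.coe_subtype]
      have hfin : Finite (K ⧸ L.subgroupOf K) :=
        Subgroup.quotient_finite_of_isOpen _ hopen'
      exact Subgroup.index_ne_zero_of_finite
    constructor
    · -- L ≤ K.map f
      have hle : L ≤ K.map f := by
        intro l hl
        have h1 : g⁻¹ * l * g ∈ L := by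
          have := (hg (g⁻¹ * l * g)).mpr
          apply this
          simpa [mul_assoc] using hl
        exact ⟨g⁻¹ * l * g, hLK h1, by rw [hfx]; group⟩
      intro h0
      exact hLrel (zero_dvd_iff.mp (h0 ▸ Subgroup.relIndex_dvd_of_le_left K hle))
    · rw [hcomap]
      have hle : L ≤ K.comap f := by
        intro l hl
        have : g * l * g⁻¹ ∈ L := (hg l).mp hl
        simpa [Subgroup.mem_comap, hfx] using hLK this
      intro h0
      exact hLrel (zero_dvd_iff.mp (h0 ▸ Subgroup.relIndex_dvd_of_le_left K hle))
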